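/- Let p ≥ q ≥ 1, and let a ∈ ℝ^p, b ∈ ℝ^q be positive vectors such that b is weakly supermajorized by the subvector a' = (a_{p−q+1},…,a_p) of a, i.e. the components are sorted increasingly, each partial sum Σ_{i=1}^{k} a_{p−q+i} ≤ Σ_{i=1}^{k} b_i for k = 1,…,q. Then the inequalities e_p(a)/e_q(b) ≤ e_{p−1}(a)/e_{q−1}(b) ≤ … ≤ e_{p−q+1}(a)/e_1(b) ≤ e_{p−q}(a) hold, where e_m denotes the m-th elementary symmetric polynomial. -/

import Mathlib

open Finset

/-- The `m`-th elementary symmetric polynomial of `a 0, …, a (p-1)`. -/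
noncomputable def esymm (p : ℕ) (a : ℕ → ℝ) (m : ℕ) : ℝ :=
  ∑ s ∈ (Finset.range p).powersetCard m, ∏ i ∈ s, a i

noncomputable def Es (s : Finset ℕ) (a : ℕ → ℝ) (m : ℤ) : ℝ :=
  if 0 ≤ m then ∑ t ∈ s.powersetCard m.toNat, ∏ i ∈ t, a i else 0

lemma Es_neg {s : Finset ℕ} {a : ℕ → ℝ} {m : ℤ} (h : m < 0) : Es s a m = 0 := by
  simp [Es, not_le.mpr h]

lemma Es_zero (s : Finset ℕ) (a : ℕ → ℝ) : Es s a 0 = 1 := by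
  simp [Es, Finset.powersetCard_zero]

lemma Es_ofNat (s : Finset ℕ) (a : ℕ → ℝ) (n : ℕ) :
    Es s a (n : ℤ) = ∑ t ∈ s.powersetCard n, ∏ i ∈ t, a i := by
  simp [Es]

lemma Es_eq_zero_of_gt {s : Finset ℕ} {a : ℕ → ℝ} {m : ℤ} (h : (s.card : ℤ) < m) :
    Es s a m = 0 := by
  have h0 : 0 ≤ m := le_trans (Int.ofNat_nonneg _) h.le
  have : s.card < m.toNat := by omega
  simp [Es, h0, Finset.powersetCard_eq_empty.mpr this]

lemma Es_nonneg {s : Finset ℕ} {a : ℕ → ℝ} (ha : ∀ i ∈ s, 0 ≤ a i) (m : ℤ) :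
    0 ≤ Es s a m := by
  unfold Es
  split
  · apply Finset.sum_nonneg
    intro t ht
    exact Finset.prod_nonneg fun i hi => ha i ((Finset.mem_powersetCard.mp ht).1 hi)
  · exact le_refl _
    
lemma Es_pos {s : Finset ℕ} {a : ℕ → ℝ} (ha : ∀ i ∈ s, 0 < a i) {m : ℤ}
    (h0 : 0 ≤ m) (h1 : m ≤ s.card) : 0 < Es s a m := by
  rw [Es, if_pos h0]
  apply Finset.sum_pos
  · intro t ht
    exact Finset.prod_pos fun i hi => ha i ((Finset.mem_powersetCard.mp ht).1 hi)
  · exact Finset.powersetCard_nonempty.mpr (by omega)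

lemma Es_congr {s : Finset ℕ} {a a' : ℕ → ℝ} (h : ∀ i ∈ s, a i = a' i) (m : ℤ) :
    Es s a m = Es s a' m := by
  unfold Es
  split
  · apply Finset.sum_congr rfl
    intro t ht
    exact Finset.prod_congr rfl fun i hi => h i ((Finset.mem_powersetCard.mp ht).1 hi)
  · rfl

lemma Es_insert {s : Finset ℕ} {x : ℕ} (hx : x ∉ s) (a : ℕ → ℝ) (m : ℤ) :
    Es (insert x s) a m = Es s a m + a x * Es s a (m - 1) := by
  rcases lt_trichotomy m 0 with hm | hm | hm
  · rw [Es_neg hm, Es_neg hm, Es_neg (by omega)]; ring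
  · subst hm
    rw [Es_zero, Es_zero, Es_neg (by norm_num)]; ring
  · obtain ⟨n, rfl⟩ : ∃ n : ℕ, m = (n : ℤ) + 1 := ⟨(m - 1).toNat, by omega⟩
    have h1 : ((n : ℤ) + 1) = ((n + 1 : ℕ) : ℤ) := by push_cast; ring
    have h2 : ((n : ℤ) + 1 - 1) = (n : ℤ) := by ring
    rw [h2, h1, Es_ofNat, Es_ofNat, Es_ofNat]
    rw [Finset.powersetCard_succ_insert hx]
    rw [Finset.sum_union]
    · congr 1
      rw [Finset.sum_image]
      · rw [Finset.mul_sum]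
        apply Finset.sum_congr rfl
        intro t ht
        have hxt : x ∉ t := fun hc => hx ((Finset.mem_powersetCard.mp ht).1 hc)
        rw [Finset.prod_insert hxt]
      · intro t ht u hu he
        have hxt : x ∉ t := fun hc => hx ((Finset.mem_powersetCard.mp ht).1 hc)
        have hxu : x ∉ u := fun hc => hx ((Finset.mem_powersetCard.mp hu).1 hc)
        have := congrArg (Finset.erase · x) he
        simpa [Finset.erase_insert hxt, Finset.erase_insert hxu] using this
    · rw [Finset.disjoint_left]
      intro t ht hti
      have hts : t ⊆ s := (Finset.mem_powersetCard.mp ht).1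
      obtain ⟨u, hu, rfl⟩ := Finset.mem_image.mp hti
      exact hx (hts (Finset.mem_insert_self x u))

lemma Es_newton {s : Finset ℕ} {a : ℕ → ℝ} (ha : ∀ i ∈ s, 0 ≤ a i) :
    ∀ l k : ℤ, l ≤ k → Es s a (k + 1) * Es s a l ≤ Es s a k * Es s a (l + 1) := by
  induction s using Finset.induction_on with
  | empty =>
    intro l k hlk
    have hz : Es (∅ : Finset ℕ) a (k + 1) * Es ∅ a l = 0 := by
      rcases lt_or_ge l 0 with h | h
      · rw [Es_neg h]; ring
      · rw [Es_eq_zero_of_gt (by simp; omega)]; ring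
    rw [hz]
    exact mul_nonneg (Es_nonneg (by simp) _) (Es_nonneg (by simp) _)
  | @insert x s hx ih =>
    intro l k hlk
    have hax : 0 ≤ a x := ha x (Finset.mem_insert_self x s)
    have ha' : ∀ i ∈ s, 0 ≤ a i := fun i hi => ha i (Finset.mem_insert_of_mem hi)
    have F1 := ih ha' l k hlk
    have F2 := ih ha' (l - 1) (k - 1) (by omega)
    rw [show k - 1 + 1 = k by ring, show l - 1 + 1 = l by ring] at F2
    have F3 : Es s a (k + 1) * Es s a (l - 1) ≤ Es s a (k - 1) * Es s a (l + 1) := by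
      rcases eq_or_lt_of_le hlk with h | h
      · subst h; rw [mul_comm]
      · calc Es s a (k + 1) * Es s a (l - 1) ≤ Es s a k * Es s a l := by
              have := ih ha' (l - 1) k (by omega)
              simpa using this
          _ ≤ Es s a (k - 1) * Es s a (l + 1) := by
              have := ih ha' l (k - 1) (by omega)
              rwa [show k - 1 + 1 = k by ring] at this
    rw [Es_insert hx, Es_insert hx, Es_insert hx, Es_insert hx]
    have h1 : k + 1 - 1 = k := by ring
    have h2 : l + 1 - 1 = l := by ring
    rw [h1, h2]
    have n1 := Es_nonneg ha' (k+1); have n2 := Es_nonneg ha' k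
    have n3 := Es_nonneg ha' (k-1); have n4 := Es_nonneg ha' l
    have n5 := Es_nonneg ha' (l-1); have n6 := Es_nonneg ha' (l+1)
    nlinarith [mul_le_mul_of_nonneg_left F3 hax, mul_le_mul_of_nonneg_left F2 (mul_nonneg hax hax)]

lemma Es_union {a : ℕ → ℝ} :
    ∀ (u t : Finset ℕ), Disjoint t u → (∀ i ∈ t ∪ u, 0 ≤ a i) →
    ∀ j k : ℤ, j + u.card ≤ k →
    Es (t ∪ u) a k * Es t a (j - 1) ≤ Es (t ∪ u) a (k - 1) * Es t a j := by
  intro u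
  induction u using Finset.induction_on with
  | empty =>
    intro t _ ha j k hjk
    rw [Finset.union_empty]
    have ha' : ∀ i ∈ t, 0 ≤ a i := fun i hi => ha i (Finset.mem_union_left _ hi)
    have := Es_newton ha' (j - 1) (k - 1) (by omega)
    rwa [show k - 1 + 1 = k by ring, show j - 1 + 1 = j by ring] at this
  | @insert x u hx ih =>
    intro t hdis ha j k hjk
    have hxt : x ∉ t := fun hc => (Finset.disjoint_left.mp hdis hc) (Finset.mem_insert_self x u)
    have hxtu : x ∉ t ∪ u := by
      simp only [Finset.mem_union]; tauto
    have hre : t ∪ insert x u = insert x (t ∪ u) := by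
      ext y; simp only [Finset.mem_union, Finset.mem_insert]; tauto
    have hdis' : Disjoint t u := hdis.mono_right (Finset.subset_insert x u)
    have ha' : ∀ i ∈ t ∪ u, 0 ≤ a i := fun i hi => ha i (by rw [hre]; exact Finset.mem_insert_of_mem hi)
    have hax : 0 ≤ a x := ha x (by rw [hre]; exact Finset.mem_insert_self _ _)
    have hcard : (u.card : ℤ) + 1 = ((insert x u).card : ℤ) := by
      rw [Finset.card_insert_of_notMem hx]; push_cast; ring
    have I1 := ih t hdis' ha' j k (by omega)
    have I2 := ih t hdis' ha' j (k - 1) (by omega)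
    rw [hre, Es_insert hxtu, Es_insert hxtu]
    have ht1 := Es_nonneg (fun i hi => ha' i (Finset.mem_union_left _ hi)) (j - 1)
    have ht2 := Es_nonneg (fun i hi => ha' i (Finset.mem_union_left _ hi)) j
    nlinarith [mul_le_mul_of_nonneg_left I2 hax]

lemma Es_shift (a : ℕ → ℝ) (d : ℕ) :
    ∀ (q : ℕ) (m : ℤ), Es (Finset.Ico d (d + q)) a m = Es (Finset.range q) (fun i => a (d + i)) m := by
  intro q
  induction q with
  | zero =>
    intro m
    rw [Nat.add_zero, Finset.Ico_self, Finset.range_zero]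
    exact Es_congr (fun i hi => absurd hi (Finset.notMem_empty i)) m
  | succ n ih =>
    intro m
    rw [show d + (n + 1) = (d + n) + 1 by ring, Nat.Ico_succ_right_eq_insert_Ico (by omega),
      Finset.range_add_one, Es_insert (by simp) , Es_insert (by simp), ih, ih]

lemma robinhood {s : Finset ℕ} {a : ℕ → ℝ} (ha : ∀ m ∈ s, 0 ≤ a m)
    {i l : ℕ} (hi : i ∈ s) (hl : l ∈ s) (hil : i ≠ l) {δ : ℝ} (hδ : 0 ≤ δ)
    (hord : a i + δ ≤ a l - δ) :
    ∀ j : ℤ, Es s a j *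
        Es s (fun m => a m + (if m = i then δ else 0) - (if m = l then δ else 0)) (j - 1) ≤
      Es s a (j - 1) *
        Es s (fun m => a m + (if m = i then δ else 0) - (if m = l then δ else 0)) j := by
  intro j
  set a' : ℕ → ℝ := fun m => a m + (if m = i then δ else 0) - (if m = l then δ else 0) with ha'def
  set t : Finset ℕ := (s.erase i).erase l with htdef
  have hlt : l ∉ t := Finset.notMem_erase _ _
  have hit : i ∉ insert l t := by
    simp only [Finset.mem_insert, htdef]
    rintro (h | h)
    · exact hil h
    · exact Finset.notMem_erase _ _ (Finset.mem_of_mem_erase h)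
  have hs : s = insert i (insert l t) := by
    rw [htdef, Finset.insert_erase, Finset.insert_erase hi]
    exact Finset.mem_erase.mpr ⟨fun h => hil h.symm, hl⟩
  have hts : t ⊆ s := by rw [hs]; intro y hy; exact Finset.mem_insert_of_mem (Finset.mem_insert_of_mem hy)
  have hat : ∀ m ∈ t, 0 ≤ a m := fun m hm => ha m (hts hm)
  have haa' : ∀ m ∈ t, a m = a' m := by
    intro m hm
    have h1 : m ≠ l := by rintro rfl; exact hlt hm
    have h2 : m ≠ i := by rintro rfl; exact hit (Finset.mem_insert_of_mem hm)
    simp [ha'def, h1, h2]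
  have ha'i : a' i = a i + δ := by simp [ha'def, hil]
  have ha'l : a' l = a l - δ := by simp [ha'def, Ne.symm hil]
  -- expansion
  have expand : ∀ (c : ℕ → ℝ) (m : ℤ), Es (insert i (insert l t)) c m =
      Es t c m + (c i + c l) * Es t c (m - 1) + (c i * c l) * Es t c (m - 2) := by
    intro c m
    rw [Es_insert hit, Es_insert hlt, Es_insert hlt]
    rw [show m - 1 - 1 = m - 2 by ring]
    ring
  have key : ∀ m : ℤ, Es s a' m = Es t a m + (a i + a l) * Es t a (m - 1) +
      ((a i + δ) * (a l - δ)) * Es t a (m - 2) := by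
    intro m
    rw [hs, expand a' m, ← Es_congr haa' m, ← Es_congr haa' (m - 1), ← Es_congr haa' (m - 2),
      ha'i, ha'l]
    ring_nf
  have key2 : ∀ m : ℤ, Es s a m = Es t a m + (a i + a l) * Es t a (m - 1) +
      (a i * a l) * Es t a (m - 2) := by
    intro m; rw [hs, expand a m]
  rw [key j, key (j - 1), key2 j, key2 (j - 1)]
  rw [show j - 1 - 1 = j - 2 by ring, show j - 1 - 2 = j - 3 by ring]
  set P0 := Es t a j
  set P1 := Es t a (j - 1)
  set P2 := Es t a (j - 2)
  set P3 := Es t a (j - 3)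
  have hσ : 0 ≤ a i + a l := add_nonneg (ha i hi) (ha l hl)
  have hs0 : 0 ≤ a i * a l := mul_nonneg (ha i hi) (ha l hl)
  have hε : a i * a l ≤ (a i + δ) * (a l - δ) := by nlinarith
  have N1 : P0 * P3 ≤ P1 * P2 := by
    have := Es_newton hat (j - 3) (j - 1) (by omega)
    rwa [show j - 1 + 1 = j by ring, show j - 3 + 1 = j - 2 by ring] at this
  have N2 : P1 * P3 ≤ P2 * P2 := by
    have := Es_newton hat (j - 3) (j - 2) (by omega)
    rwa [show j - 2 + 1 = j - 1 by ring, show j - 3 + 1 = j - 2 by ring] at this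
  have n0 := Es_nonneg hat j
  have n1 := Es_nonneg hat (j - 1)
  have n2 := Es_nonneg hat (j - 2)
  have n3 := Es_nonneg hat (j - 3)
  -- goal: (X j)(X (j-1) + ε P3) ≤ (X (j-1))(X j + ε P2) where ε = (ai+δ)(al-δ) - ai*al ≥ 0
  -- reduces to ε * (X j * P3) ≤ ε * (X (j-1) * P2)
  nlinarith [mul_le_mul_of_nonneg_left N2 hσ, sq_nonneg ((a i + δ) * (a l - δ) - a i * a l),
    mul_le_mul_of_nonneg_left N1 (sub_nonneg.mpr hε),
    mul_le_mul_of_nonneg_left (mul_le_mul_of_nonneg_left N2 hσ) (sub_nonneg.mpr hε),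
    mul_le_mul_of_nonneg_left N2 hs0,
    mul_le_mul_of_nonneg_left (mul_le_mul_of_nonneg_left N2 hs0) (sub_nonneg.mpr hε)]

lemma smoothing (q : ℕ) (b : ℕ → ℝ) (hb : ∀ i, i < q → 0 < b i)
    (hbmono : ∀ i j, i ≤ j → j < q → b i ≤ b j) :
    ∀ (n : ℕ) (z : ℕ → ℝ), (∀ i, i < q → 0 < z i) →
    (∀ k, k ≤ q → ∑ i ∈ Finset.range k, z i ≤ ∑ i ∈ Finset.range k, b i) →
    (∑ i ∈ Finset.range q, z i = ∑ i ∈ Finset.range q, b i) →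
    ((Finset.range q).filter (fun m => z m ≠ b m)).card ≤ n →
    ∀ j : ℤ, Es (Finset.range q) z j * Es (Finset.range q) b (j - 1) ≤
      Es (Finset.range q) z (j - 1) * Es (Finset.range q) b j := by
  intro n
  induction n with
  | zero =>
    intro z _ _ _ hcard j
    have : ∀ m ∈ Finset.range q, z m = b m := by
      intro m hm
      by_contra hne
      have : m ∈ (Finset.range q).filter (fun m => z m ≠ b m) := Finset.mem_filter.mpr ⟨hm, hne⟩
      have := Finset.card_pos.mpr ⟨m, this⟩
      omega
    rw [Es_congr this j, Es_congr this (j - 1)]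
    rw [mul_comm]
  | succ n ih =>
    intro z hzpos hpre htot hcard j
    by_cases hE : ((Finset.range q).filter (fun m => z m ≠ b m)).card = 0
    · have : ∀ m ∈ Finset.range q, z m = b m := by
        intro m hm
        by_contra hne
        have : m ∈ (Finset.range q).filter (fun m => z m ≠ b m) := Finset.mem_filter.mpr ⟨hm, hne⟩
        have := Finset.card_pos.mpr ⟨m, this⟩
        omega
      rw [Es_congr this j, Es_congr this (j - 1)]
      rw [mul_comm]
    -- nonempty difference set
    have hFne : ((Finset.range q).filter (fun m => z m ≠ b m)).Nonempty :=
      Finset.card_pos.mp (by omega)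
    set F := (Finset.range q).filter (fun m => z m ≠ b m) with hFdef
    set i := F.min' hFne with hidef
    have hiF : i ∈ F := Finset.min'_mem _ _
    have hiq : i < q := Finset.mem_range.mp (Finset.mem_filter.mp hiF).1
    have hine : z i ≠ b i := (Finset.mem_filter.mp hiF).2
    have hbelow : ∀ m, m < i → z m = b m := by
      intro m hm
      by_contra hne
      have hmq : m < q := lt_trans hm hiq
      have : m ∈ F := Finset.mem_filter.mpr ⟨Finset.mem_range.mpr hmq, hne⟩
      have := Finset.min'_le F m this
      omega
    have hzib : z i < b i := by
      have h1 := hpre (i + 1) (by omega)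
      rw [Finset.sum_range_succ, Finset.sum_range_succ] at h1
      have h2 : ∑ m ∈ Finset.range i, z m = ∑ m ∈ Finset.range i, b m :=
        Finset.sum_congr rfl fun m hm => hbelow m (Finset.mem_range.mp hm)
      rcases lt_or_eq_of_le (by linarith : z i ≤ b i) with h | h
      · exact h
      · exact absurd h hine
    -- the set of indices above i where z exceeds b
    set T := (Finset.range q).filter (fun m => i < m ∧ b m < z m) with hTdef
    have hTne : T.Nonempty := by
      by_contra hTe
      rw [Finset.not_nonempty_iff_eq_empty] at hTe
      have hle : ∀ m ∈ Finset.range q, z m ≤ b m := by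
        intro m hm
        rcases lt_trichotomy m i with h | h | h
        · exact le_of_eq (hbelow m h)
        · subst h; exact le_of_lt hzib
        · by_contra hgt
          have : m ∈ T := Finset.mem_filter.mpr ⟨hm, h, lt_of_not_ge hgt⟩
          rw [hTe] at this
          exact absurd this (Finset.notMem_empty m)
      have : ∑ m ∈ Finset.range q, z m < ∑ m ∈ Finset.range q, b m :=
        Finset.sum_lt_sum hle ⟨i, Finset.mem_range.mpr hiq, hzib⟩
      linarith
    set l := T.min' hTne with hldef
    have hlT : l ∈ T := Finset.min'_mem _ _
    have hlq : l < q := Finset.mem_range.mp (Finset.mem_filter.mp hlT).1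
    have hil : i < l := ((Finset.mem_filter.mp hlT).2).1
    have hzlb : b l < z l := ((Finset.mem_filter.mp hlT).2).2
    have hmid : ∀ m, i < m → m < l → z m ≤ b m := by
      intro m h1 h2
      by_contra hgt
      have : m ∈ T := Finset.mem_filter.mpr ⟨Finset.mem_range.mpr (by omega), h1, lt_of_not_ge hgt⟩
      have := Finset.min'_le T m this
      omega
    set δ := min (b i - z i) (z l - b l) with hδdef
    have hδpos : 0 < δ := lt_min (by linarith) (by linarith)
    set z' : ℕ → ℝ := fun m => z m + (if m = i then δ else 0) - (if m = l then δ else 0)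
      with hz'def
    have hz'i : z' i = z i + δ := by simp [hz'def, Nat.ne_of_lt hil]
    have hz'l : z' l = z l - δ := by simp [hz'def, Nat.ne_of_gt hil]
    have hz'o : ∀ m, m ≠ i → m ≠ l → z' m = z m := by
      intro m h1 h2; simp [hz'def, h1, h2]
    have hord : z i + δ ≤ z l - δ := by
      have h1 : z i + δ ≤ b i := by
        have := min_le_left (b i - z i) (z l - b l); linarith
      have h2 : b l ≤ z l - δ := by
        have := min_le_right (b i - z i) (z l - b l); linarith
      have h3 : b i ≤ b l := hbmono i l (le_of_lt hil) hlq
      linarith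
    -- step inequality
    have hstep := robinhood (fun m hm => le_of_lt (hzpos m (Finset.mem_range.mp hm)))
      (Finset.mem_range.mpr hiq) (Finset.mem_range.mpr hlq) (Nat.ne_of_lt hil)
      (le_of_lt hδpos) hord
    -- z' invariants
    have hz'pos : ∀ m, m < q → 0 < z' m := by
      intro m hm
      rcases eq_or_ne m i with h1 | h1
      · rw [h1, hz'i]
        have := hzpos i hiq
        linarith
      rcases eq_or_ne m l with h2 | h2
      · rw [h2, hz'l]
        have h3 := min_le_right (b i - z i) (z l - b l)
        have h4 := hb l hlq
        linarith
      · rw [hz'o m h1 h2]; exact hzpos m hm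
    have hsum : ∀ k, ∑ m ∈ Finset.range k, z' m = (∑ m ∈ Finset.range k, z m) +
        (if i ∈ Finset.range k then δ else 0) - (if l ∈ Finset.range k then δ else 0) := by
      intro k
      rw [hz'def]
      rw [Finset.sum_sub_distrib, Finset.sum_add_distrib, Finset.sum_ite_eq' (Finset.range k) i,
        Finset.sum_ite_eq' (Finset.range k) l]
    have hpre' : ∀ k, k ≤ q → ∑ m ∈ Finset.range k, z' m ≤ ∑ m ∈ Finset.range k, b m := by
      intro k hk
      rw [hsum k]
      simp only [Finset.mem_range]
      by_cases h2 : l < k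
      · rw [if_pos (by omega), if_pos h2]
        have := hpre k hk; linarith
      · rw [if_neg h2]
        by_cases h1 : i < k
        · rw [if_pos h1]
          -- need sum z + δ ≤ sum b on range k, where i < k ≤ l (as ¬ l < k)
          have hterm : ∀ m ∈ Finset.range k, (if m = i then b i - z i else 0) ≤ b m - z m := by
            intro m hm
            rw [Finset.mem_range] at hm
            rcases eq_or_ne m i with rfl | hne
            · rw [if_pos rfl]
            · rw [if_neg hne]
              rcases lt_or_ge m i with h | h
              · rw [hbelow m h]; linarith
              · have : i < m := by omega
                have := hmid m this (by omega)
                linarith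
          have hsumterm := Finset.sum_le_sum hterm
          rw [Finset.sum_ite_eq' (Finset.range k) i] at hsumterm
          rw [if_pos (Finset.mem_range.mpr h1), Finset.sum_sub_distrib] at hsumterm
          have hδle : δ ≤ b i - z i := min_le_left _ _
          linarith
        · rw [if_neg h1]
          have := hpre k hk; linarith
    have htot' : ∑ m ∈ Finset.range q, z' m = ∑ m ∈ Finset.range q, b m := by
      rw [hsum q, if_pos (Finset.mem_range.mpr hiq), if_pos (Finset.mem_range.mpr hlq)]
      linarith
    -- cardinality decreases
    have hsub : (Finset.range q).filter (fun m => z' m ≠ b m) ⊂ F := by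
      constructor
      · intro m hm
        rw [Finset.mem_filter] at hm ⊢
        refine ⟨hm.1, ?_⟩
        rcases eq_or_ne m i with rfl | h1
        · exact hine
        rcases eq_or_ne m l with rfl | h2
        · exact ne_of_gt hzlb
        · rw [← hz'o m h1 h2]; exact hm.2
      · intro hcon
        rcases min_cases (b i - z i) (z l - b l) with ⟨hmin, _⟩ | ⟨hmin, _⟩
        · have : i ∈ (Finset.range q).filter (fun m => z' m ≠ b m) := hcon hiF
          rw [Finset.mem_filter] at this
          apply this.2
          rw [hz'i, hδdef, hmin]; ring
        · have hlF : l ∈ F := Finset.mem_filter.mpr ⟨Finset.mem_range.mpr hlq, ne_of_gt hzlb⟩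
          have : l ∈ (Finset.range q).filter (fun m => z' m ≠ b m) := hcon hlF
          rw [Finset.mem_filter] at this
          apply this.2
          rw [hz'l, hδdef, hmin]; ring
    have hcard' : ((Finset.range q).filter (fun m => z' m ≠ b m)).card ≤ n := by
      have := Finset.card_lt_card hsub
      omega
    have hrest := ih z' hz'pos hpre' htot' hcard' j
    -- compose: ratio z ≤ ratio z' ≤ ratio b
    -- trivial cases first
    rcases le_or_gt j 0 with hj | hj
    · rw [Es_neg (by omega : j - 1 < 0)]
      have nz := Es_nonneg (fun m hm => le_of_lt (hzpos m (Finset.mem_range.mp hm))) (j-1)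
      have nb := Es_nonneg (fun m hm => le_of_lt (hb m (Finset.mem_range.mp hm))) j
      nlinarith [mul_nonneg nz nb]
    rcases le_or_gt (j : ℤ) (q : ℤ) with hjq | hjq
    · -- main case: 1 ≤ j ≤ q
      have hz'1 : 0 < Es (Finset.range q) z' (j - 1) :=
        Es_pos (fun m hm => hz'pos m (Finset.mem_range.mp hm)) (by omega)
          (by rw [Finset.card_range]; omega)
      have hz'2 : 0 ≤ Es (Finset.range q) z' j :=
        Es_nonneg (fun m hm => le_of_lt (hz'pos m (Finset.mem_range.mp hm))) j
      have nz1 := Es_nonneg (fun m hm => le_of_lt (hzpos m (Finset.mem_range.mp hm))) (j-1)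
      have nb1 := Es_nonneg (fun m hm => le_of_lt (hb m (Finset.mem_range.mp hm))) (j-1)
      have nb2 := Es_nonneg (fun m hm => le_of_lt (hb m (Finset.mem_range.mp hm))) j
      -- hstep : Es z j * Es z' (j-1) ≤ Es z (j-1) * Es z' j
      -- hrest : Es z' j * Es b (j-1) ≤ Es z' (j-1) * Es b j
      have h1 : Es (Finset.range q) z j * Es (Finset.range q) z' (j-1) *
          Es (Finset.range q) b (j-1) ≤
          Es (Finset.range q) z (j-1) * (Es (Finset.range q) z' (j-1) *
          Es (Finset.range q) b j) := by
        calc Es (Finset.range q) z j * Es (Finset.range q) z' (j-1) * Es (Finset.range q) b (j-1)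
            ≤ Es (Finset.range q) z (j-1) * Es (Finset.range q) z' j *
              Es (Finset.range q) b (j-1) :=
              mul_le_mul_of_nonneg_right (hstep j) nb1
          _ = Es (Finset.range q) z (j-1) * (Es (Finset.range q) z' j *
              Es (Finset.range q) b (j-1)) := by ring
          _ ≤ Es (Finset.range q) z (j-1) * (Es (Finset.range q) z' (j-1) *
              Es (Finset.range q) b j) :=
              mul_le_mul_of_nonneg_left hrest nz1
      have h2 : Es (Finset.range q) z j * Es (Finset.range q) b (j-1) ≤
          Es (Finset.range q) z (j-1) * Es (Finset.range q) b j := by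
        have := h1
        rw [show Es (Finset.range q) z (j-1) * (Es (Finset.range q) z' (j-1) *
          Es (Finset.range q) b j) = Es (Finset.range q) z (j-1) *
          Es (Finset.range q) b j * Es (Finset.range q) z' (j-1) by ring,
          show Es (Finset.range q) z j * Es (Finset.range q) z' (j-1) *
          Es (Finset.range q) b (j-1) = Es (Finset.range q) z j *
          Es (Finset.range q) b (j-1) * Es (Finset.range q) z' (j-1) by ring] at this
        exact le_of_mul_le_mul_right this hz'1
      exact h2
    · -- j > q : Es z j = 0
      rw [Es_eq_zero_of_gt (by rw [Finset.card_range]; omega)]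
      have nz := Es_nonneg (fun m hm => le_of_lt (hzpos m (Finset.mem_range.mp hm))) (j-1)
      have nb := Es_nonneg (fun m hm => le_of_lt (hb m (Finset.mem_range.mp hm))) j
      nlinarith [mul_nonneg nz nb]

lemma base_case (q : ℕ) (hq : 1 ≤ q) (c b : ℕ → ℝ)
    (hc : ∀ i, i < q → 0 < c i) (hb : ∀ i, i < q → 0 < b i)
    (hbmono : ∀ i j, i ≤ j → j < q → b i ≤ b j)
    (hpre : ∀ k, k ≤ q → ∑ i ∈ Finset.range k, c i ≤ ∑ i ∈ Finset.range k, b i) :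
    ∀ j : ℤ, 1 ≤ j → j ≤ (q : ℤ) →
      Es (Finset.range q) c j * Es (Finset.range q) b (j - 1) ≤
      Es (Finset.range q) c (j - 1) * Es (Finset.range q) b j := by
  intro j hj1 hjq
  set t : ℝ := (∑ i ∈ Finset.range q, b i) - (∑ i ∈ Finset.range q, c i) with htdef
  have ht : 0 ≤ t := by
    have := hpre q (le_refl q)
    linarith
  set z : ℕ → ℝ := fun m => if m = q - 1 then c (q - 1) + t else c m with hzdef
  have hzq : z (q - 1) = c (q - 1) + t := by simp [hzdef]
  have hzo : ∀ m, m ≠ q - 1 → z m = c m := by intro m hm; simp [hzdef, hm]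
  have hrq : Finset.range q = insert (q - 1) (Finset.range (q - 1)) := by
    rw [← Finset.range_add_one]
    congr 1
    omega
  have hnotmem : (q - 1) ∉ Finset.range (q - 1) := by simp
  have hcA : ∀ m ∈ Finset.range (q - 1), 0 ≤ c m :=
    fun m hm => le_of_lt (hc m (by have := Finset.mem_range.mp hm; omega))
  have hzc : ∀ m ∈ Finset.range (q - 1), z m = c m :=
    fun m hm => hzo m (by have := Finset.mem_range.mp hm; omega)
  -- step 1: ratio c ≤ ratio z
  have hmono : ∀ m : ℤ, Es (Finset.range q) c m * Es (Finset.range q) z (m - 1) ≤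
      Es (Finset.range q) c (m - 1) * Es (Finset.range q) z m := by
    intro m
    have hec : ∀ m' : ℤ, Es (Finset.range q) c m' =
        Es (Finset.range (q-1)) c m' + c (q-1) * Es (Finset.range (q-1)) c (m' - 1) := by
      intro m'; rw [hrq, Es_insert hnotmem]
    have hez : ∀ m' : ℤ, Es (Finset.range q) z m' =
        Es (Finset.range (q-1)) c m' + (c (q-1) + t) * Es (Finset.range (q-1)) c (m' - 1) := by
      intro m'
      rw [hrq, Es_insert hnotmem, ← Es_congr hzc m', ← Es_congr hzc (m' - 1), hzq]
    rw [hec m, hec (m-1), hez m, hez (m-1), show m - 1 - 1 = m - 2 by ring]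
    have hN : Es (Finset.range (q-1)) c m * Es (Finset.range (q-1)) c (m - 2) ≤
        Es (Finset.range (q-1)) c (m-1) * Es (Finset.range (q-1)) c (m-1) := by
      have := Es_newton hcA (m - 2) (m - 1) (by omega)
      rwa [show m - 1 + 1 = m by ring, show m - 2 + 1 = m - 1 by ring] at this
    have hu : 0 ≤ c (q - 1) := le_of_lt (hc (q-1) (by omega))
    have n0 := Es_nonneg hcA m
    have n1 := Es_nonneg hcA (m - 1)
    have n2 := Es_nonneg hcA (m - 2)
    nlinarith [mul_le_mul_of_nonneg_left hN ht]
  -- step 2: smoothing from z to b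
  have hzpos : ∀ m, m < q → 0 < z m := by
    intro m hm
    rcases eq_or_ne m (q - 1) with h | h
    · rw [h, hzq]
      have := hc (q - 1) (by omega)
      linarith
    · rw [hzo m h]; exact hc m hm
  have hztot : ∑ m ∈ Finset.range q, z m = ∑ m ∈ Finset.range q, b m := by
    have e1 : ∑ m ∈ Finset.range q, z m = z (q-1) + ∑ m ∈ Finset.range (q-1), z m := by
      rw [hrq, Finset.sum_insert hnotmem]
    have e2 : ∑ m ∈ Finset.range q, c m = c (q-1) + ∑ m ∈ Finset.range (q-1), c m := by
      rw [hrq, Finset.sum_insert hnotmem]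
    rw [e1, hzq, Finset.sum_congr rfl hzc, htdef]
    linarith [e2]
  have hzpre : ∀ k, k ≤ q → ∑ m ∈ Finset.range k, z m ≤ ∑ m ∈ Finset.range k, b m := by
    intro k hk
    rcases eq_or_lt_of_le hk with rfl | hk'
    · linarith [hztot]
    · have : ∑ m ∈ Finset.range k, z m = ∑ m ∈ Finset.range k, c m := by
        apply Finset.sum_congr rfl
        intro m hm
        exact hzo m (by have := Finset.mem_range.mp hm; omega)
      rw [this]
      exact hpre k hk
  have hsmooth := smoothing q b hb hbmono q z hzpos hzpre hztot
    (le_trans (Finset.card_filter_le _ _) (by rw [Finset.card_range])) j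
  -- compose
  have hz1 : 0 < Es (Finset.range q) z (j - 1) :=
    Es_pos (fun m hm => hzpos m (Finset.mem_range.mp hm)) (by omega)
      (by rw [Finset.card_range]; omega)
  have nc1 := Es_nonneg (fun m hm => le_of_lt (hc m (Finset.mem_range.mp hm))) (j-1)
  have nb1 := Es_nonneg (fun m hm => le_of_lt (hb m (Finset.mem_range.mp hm))) (j-1)
  have h1 : Es (Finset.range q) c j * Es (Finset.range q) b (j-1) *
      Es (Finset.range q) z (j-1) ≤
      Es (Finset.range q) c (j-1) * Es (Finset.range q) b j *
      Es (Finset.range q) z (j-1) := by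
    calc Es (Finset.range q) c j * Es (Finset.range q) b (j-1) * Es (Finset.range q) z (j-1)
        = Es (Finset.range q) c j * Es (Finset.range q) z (j-1) *
          Es (Finset.range q) b (j-1) := by ring
      _ ≤ Es (Finset.range q) c (j-1) * Es (Finset.range q) z j *
          Es (Finset.range q) b (j-1) := mul_le_mul_of_nonneg_right (hmono j) nb1
      _ = Es (Finset.range q) c (j-1) * (Es (Finset.range q) z j *
          Es (Finset.range q) b (j-1)) := by ring
      _ ≤ Es (Finset.range q) c (j-1) * (Es (Finset.range q) z (j-1) *
          Es (Finset.range q) b j) := mul_le_mul_of_nonneg_left hsmooth nc1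
      _ = Es (Finset.range q) c (j-1) * Es (Finset.range q) b j *
          Es (Finset.range q) z (j-1) := by ring
  exact le_of_mul_le_mul_right h1 hz1
lemma esymm_eq_Es (p : ℕ) (a : ℕ → ℝ) (m : ℕ) : esymm p a m = Es (Finset.range p) a (m : ℤ) := by
  rw [Es_ofNat]; rfl

theorem stmt_7 (p q : ℕ) (hq : 1 ≤ q) (hpq : q ≤ p) (a b : ℕ → ℝ)
    (ha : ∀ i < p, 0 < a i) (hb : ∀ j < q, 0 < b j)
    (hamono : ∀ i j, i ≤ j → j < p → a i ≤ a j)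
    (hbmono : ∀ i j, i ≤ j → j < q → b i ≤ b j)
    (hmaj : ∀ k ≤ q, ∑ i ∈ Finset.range k, a (p - q + i) ≤ ∑ i ∈ Finset.range k, b i) :
    ∀ j, 1 ≤ j → j ≤ q →
      esymm p a (p - q + j) / esymm q b j ≤ esymm p a (p - q + j - 1) / esymm q b (j - 1) := by
  intro j hj1 hjq
  set d := p - q with hddef
  have hdq : d + q = p := by omega
  have hbpos : ∀ i ∈ Finset.range q, 0 < b i := fun i hi => hb i (Finset.mem_range.mp hi)
  have hbj : 0 < esymm q b j := by
    rw [esymm_eq_Es]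
    exact Es_pos hbpos (Int.ofNat_nonneg j) (by rw [Finset.card_range]; exact_mod_cast hjq)
  have hbj1 : 0 < esymm q b (j - 1) := by
    rw [esymm_eq_Es]
    exact Es_pos hbpos (Int.ofNat_nonneg _) (by rw [Finset.card_range]; exact_mod_cast by omega)
  rw [div_le_div_iff₀ hbj hbj1]
  rw [esymm_eq_Es, esymm_eq_Es, esymm_eq_Es, esymm_eq_Es]
  have c1 : ((d + j : ℕ) : ℤ) = (d : ℤ) + (j : ℤ) := by push_cast; ring
  have c2 : ((d + j - 1 : ℕ) : ℤ) = (d : ℤ) + (j : ℤ) - 1 := by omega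
  have c3 : ((j - 1 : ℕ) : ℤ) = (j : ℤ) - 1 := by omega
  rw [c1, c2, c3]
  set c : ℕ → ℝ := fun i => a (d + i) with hcdef
  -- step 1 : Es_union
  have hun : Finset.Ico d p ∪ Finset.range d = Finset.range p := by
    rw [Finset.range_eq_Ico, Finset.union_comm]
    exact (Finset.Ico_union_Ico_eq_Ico (Nat.zero_le d) (show d ≤ p by omega)).trans (by rw [Finset.range_eq_Ico])
  have hdis : Disjoint (Finset.Ico d p) (Finset.range d) := by
    rw [Finset.range_eq_Ico]
    exact (Finset.Ico_disjoint_Ico_consecutive 0 d p).symm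
  have hanon : ∀ i ∈ Finset.Ico d p ∪ Finset.range d, 0 ≤ a i := by
    intro i hi
    rw [hun] at hi
    exact le_of_lt (ha i (Finset.mem_range.mp hi))
  have h1 := Es_union (Finset.range d) (Finset.Ico d p) hdis hanon (j : ℤ) ((d : ℤ) + j)
    (by rw [Finset.card_range]; omega)
  rw [hun] at h1
  have hIco : Finset.Ico d p = Finset.Ico d (d + q) := by rw [hdq]
  have hsh : ∀ m : ℤ, Es (Finset.Ico d p) a m = Es (Finset.range q) c m := by
    intro m
    rw [hIco, Es_shift]
  rw [hsh, hsh] at h1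
  -- step 2 : base case
  have hcpos : ∀ i, i < q → 0 < c i := fun i hi => ha (d + i) (by omega)
  have hcpre : ∀ k, k ≤ q → ∑ i ∈ Finset.range k, c i ≤ ∑ i ∈ Finset.range k, b i := by
    intro k hk
    exact hmaj k hk
  have h3 := base_case q hq c b hcpos hb hbmono hcpre (j : ℤ) (by exact_mod_cast hj1)
    (by exact_mod_cast hjq)
  -- compose
  have hC0 : 0 < Es (Finset.range q) c ((j:ℤ) - 1) :=
    Es_pos (fun i hi => hcpos i (Finset.mem_range.mp hi)) (by omega)
      (by rw [Finset.card_range]; exact_mod_cast by omega)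
  have hC1 : 0 < Es (Finset.range q) c (j : ℤ) :=
    Es_pos (fun i hi => hcpos i (Finset.mem_range.mp hi)) (by omega)
      (by rw [Finset.card_range]; exact_mod_cast hjq)
  have hX0 : 0 ≤ Es (Finset.range p) a ((d:ℤ) + j - 1) :=
    Es_nonneg (fun i hi => le_of_lt (ha i (Finset.mem_range.mp hi))) _
  have hB0 : 0 ≤ Es (Finset.range q) b ((j:ℤ) - 1) := Es_nonneg (fun i hi => le_of_lt (hbpos i hi)) _
  have hB1 : 0 ≤ Es (Finset.range q) b (j:ℤ) := Es_nonneg (fun i hi => le_of_lt (hbpos i hi)) _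
  have hmul := mul_le_mul h1 h3 (mul_nonneg (le_of_lt hC1) hB0)
    (mul_nonneg hX0 (le_of_lt hC1))
  -- hmul : (X1 * C0) * (C1 * B0) ≤ (X0 * C1) * (C0 * B1)
  have hfin : Es (Finset.range p) a ((d:ℤ) + j) * Es (Finset.range q) b ((j:ℤ) - 1) *
      (Es (Finset.range q) c ((j:ℤ) - 1) * Es (Finset.range q) c (j:ℤ)) ≤
      Es (Finset.range p) a ((d:ℤ) + j - 1) * Es (Finset.range q) b (j:ℤ) *
      (Es (Finset.range q) c ((j:ℤ) - 1) * Es (Finset.range q) c (j:ℤ)) := by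
    nlinarith [hmul]
  exact le_of_mul_le_mul_right hfin (mul_pos hC0 hC1)
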